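/- Let $A$ be a unital C*-algebra, $p \in A$ a projection, and $a \in A$ with $\|a\| \le 1$. If $\|a^*a - p\| < 1/16$ and $\|aa^* - p\| < 1/16$, then, setting $b = pap$, there exists a partial isometry $v \in A$ with $v^*v = p = vv^*$ and $\|v - b\| < 2/7$. -/
import Mathlib

/-- If a selfadjoint element `x` commutes with a selfadjoint element `e`, then `x`
commutes with any real continuous functional calculus applied to `e`. -/
lemma aux_commute_cfc {A : Type*} [CStarAlgebra A] {x e : A} (he : IsSelfAdjoint e)
    (hx : star x = x) (hc : x * e = e * x) (f : ℝ → ℝ) :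
    x * cfc f e = cfc f e * x := by
  rw [cfc_real_eq_complex f he]
  set g : ℂ → ℂ := fun z => (f z.re : ℂ) with hg
  have hset : ((StarSubalgebra.centralizer ℂ {x} : StarSubalgebra ℂ A) : Set A)
      = {z : A | x * z = z * x} := by
    ext z
    rw [SetLike.mem_coe, StarSubalgebra.mem_centralizer_iff ℂ]
    simp [hx]
  have hclosed : IsClosed ((StarSubalgebra.centralizer ℂ {x} : StarSubalgebra ℂ A) : Set A) := by
    rw [hset]
    exact isClosed_eq (by fun_prop) (by fun_prop)
  have hmem : cfc g e ∈ StarSubalgebra.centralizer ℂ {x} := by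
    refine cfc_cases (fun y => y ∈ StarSubalgebra.centralizer ℂ {x}) e g (zero_mem _) ?_
    intro hgc hnormal
    have hsub : StarAlgebra.elemental ℂ e ≤ StarSubalgebra.centralizer ℂ {x} := by
      refine StarAlgebra.elemental.le_of_mem hclosed ?_
      rw [StarSubalgebra.mem_centralizer_iff ℂ]
      rintro y rfl
      exact ⟨hc, by rw [hx]; exact hc⟩
    apply hsub
    rw [cfcHom_eq_of_isStarNormal]
    exact Subtype.coe_prop _
  exact (((StarSubalgebra.mem_centralizer_iff ℂ).mp hmem) x rfl).1

/-- Section 6.1: if `a` is almost an isometry implementing a projection `p`,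
then there is a unitary of the corner `pAp` (a partial isometry `v` with
`v*v = p = vv*`) within `2/7` of `b = pap`. -/
theorem stmt_1 {A : Type*} [CStarAlgebra A] (p a : A)
    (hp : IsIdempotentElem p) (hpsa : IsSelfAdjoint p)
    (ha : ‖a‖ ≤ 1)
    (h1 : ‖star a * a - p‖ < 1 / 16) (h2 : ‖a * star a - p‖ < 1 / 16) :
    ∃ v : A, star v * v = p ∧ v * star v = p ∧ ‖v - p * a * p‖ < 2 / 7 := by
  rcases subsingleton_or_nontrivial A with hA | hA
  · exact ⟨p, Subsingleton.elim _ _, Subsingleton.elim _ _, by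
      rw [Subsingleton.elim (p - p * a * p) 0, norm_zero]; norm_num⟩
  have hps : star p = p := hpsa.star_eq
  have hpp : p * p = p := hp
  have hpp' : ∀ x : A, p * (p * x) = p * x := fun x => by rw [← mul_assoc, hpp]
  obtain ⟨q, hqdef⟩ : ∃ q : A, q = 1 - p := ⟨_, rfl⟩
  have hqs : star q = q := by simp [hqdef, hps]
  have hqq : q * q = q := by
    rw [hqdef]
    simp only [sub_mul, mul_sub, one_mul, mul_one, hpp]
    abel
  have hpq : p * q = 0 := by rw [hqdef]; simp [mul_sub, hpp]
  have hqp : q * p = 0 := by rw [hqdef]; simp [sub_mul, hpp]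
  have hpnorm : ‖p‖ ≤ 1 := by
    have h := CStarRing.norm_star_mul_self (x := p)
    rw [hps, hpp] at h
    nlinarith [norm_nonneg p]
  have hqnorm : ‖q‖ ≤ 1 := by
    have h := CStarRing.norm_star_mul_self (x := q)
    rw [hqs, hqq] at h
    nlinarith [norm_nonneg q]
  -- key bound : almost isometry means (1-p) kills a (resp. star a) up to 1/4
  have key : ∀ x : A, ‖x * star x - p‖ < 1 / 16 → ‖q * x‖ < 1 / 4 := by
    intro x hx
    have e1 : (q * x) * star (q * x) = q * (x * star x - p) * q := by
      rw [star_mul, hqs, mul_sub, sub_mul]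
      rw [show q * p * q = 0 by rw [hqp, zero_mul]]
      rw [sub_zero]
      simp only [mul_assoc]
    have e2 : ‖q * x‖ * ‖q * x‖ = ‖q * (x * star x - p) * q‖ := by
      rw [← e1, CStarRing.norm_self_mul_star]
    have e3 : ‖q * (x * star x - p) * q‖ ≤ ‖x * star x - p‖ := by
      calc ‖q * (x * star x - p) * q‖ ≤ ‖q * (x * star x - p)‖ * ‖q‖ := norm_mul_le _ _
        _ ≤ ‖q‖ * ‖x * star x - p‖ * ‖q‖ := by gcongr; exact norm_mul_le _ _
        _ ≤ 1 * ‖x * star x - p‖ * 1 := by gcongr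
        _ = ‖x * star x - p‖ := by ring
    nlinarith [norm_nonneg (q * x)]
  have hqa : ‖q * a‖ < 1 / 4 := key a h2
  have hqsa : ‖q * star a‖ < 1 / 4 := key (star a) (by simpa [star_star] using h1)
  obtain ⟨b, hbdef⟩ : ∃ b : A, b = p * a * p := ⟨_, rfl⟩
  have hbs : star b = p * star a * p := by
    simp [hbdef, star_mul, hps, mul_assoc]
  have hpb : p * b = b := by rw [hbdef, ← mul_assoc, ← mul_assoc, hpp]
  have hbp : b * p = b := by rw [hbdef, mul_assoc, mul_assoc, hpp, ← mul_assoc]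
  have hpbs : p * star b = star b := by rw [hbs, ← mul_assoc, ← mul_assoc, hpp]
  have hbsp : star b * p = star b := by rw [hbs, mul_assoc, mul_assoc, hpp, ← mul_assoc]
  have hbq : b * q = 0 := by rw [hqdef, mul_sub, mul_one, hbp, sub_self]
  have hqbs : q * star b = 0 := by
    rw [hbs, ← mul_assoc, ← mul_assoc, hqp, zero_mul, zero_mul]
  have hbnorm : ‖b‖ ≤ 1 := by
    rw [hbdef]
    calc ‖p * a * p‖ ≤ ‖p * a‖ * ‖p‖ := norm_mul_le _ _
      _ ≤ ‖p‖ * ‖a‖ * ‖p‖ := by gcongr; exact norm_mul_le _ _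
      _ ≤ 1 * 1 * 1 := by gcongr
      _ = 1 := by ring
  have hconj : ∀ X : A, ‖p * X * p‖ ≤ ‖X‖ := by
    intro X
    calc ‖p * X * p‖ ≤ ‖p * X‖ * ‖p‖ := norm_mul_le _ _
      _ ≤ ‖p‖ * ‖X‖ * ‖p‖ := by gcongr; exact norm_mul_le _ _
      _ ≤ 1 * ‖X‖ * 1 := by gcongr
      _ = ‖X‖ := by ring
  -- `b` is almost an isometry of the corner
  have hbb : ‖star b * b - p‖ < 1 / 8 := by
    have hid : star b * b - p
        = p * ((star a * a - p) - star (q * a) * (q * a)) * p := by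
      rw [hbs, hbdef, star_mul, hqs, hqdef]
      simp only [sub_mul, mul_sub, one_mul, mul_one, mul_assoc, hpp, hpp']
      abel
    rw [hid]
    calc ‖p * ((star a * a - p) - star (q * a) * (q * a)) * p‖
        ≤ ‖(star a * a - p) - star (q * a) * (q * a)‖ := hconj _
      _ ≤ ‖star a * a - p‖ + ‖star (q * a) * (q * a)‖ := norm_sub_le _ _
      _ < 1 / 8 := by
          rw [CStarRing.norm_star_mul_self]
          nlinarith [norm_nonneg (q * a)]
  have hbbs : ‖b * star b - p‖ < 1 / 8 := by
    have hid : b * star b - p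
        = p * ((a * star a - p) - star (q * star a) * (q * star a)) * p := by
      rw [hbs, hbdef, star_mul, hqs, star_star, hqdef]
      simp only [sub_mul, mul_sub, one_mul, mul_one, mul_assoc, hpp, hpp']
      abel
    rw [hid]
    calc ‖p * ((a * star a - p) - star (q * star a) * (q * star a)) * p‖
        ≤ ‖(a * star a - p) - star (q * star a) * (q * star a)‖ := hconj _
      _ ≤ ‖a * star a - p‖ + ‖star (q * star a) * (q * star a)‖ := norm_sub_le _ _
      _ < 1 / 8 := by
          rw [CStarRing.norm_star_mul_self]
          nlinarith [norm_nonneg (q * star a)]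
  -- the auxiliary positive invertible element c
  obtain ⟨c, hcdef⟩ : ∃ c : A, c = star b * b + q := ⟨_, rfl⟩
  have hc1 : ‖c - 1‖ < 1 / 8 := by
    have : c - 1 = star b * b - p := by rw [hcdef, hqdef]; abel
    rwa [this]
  have hcsa : star c = c := by
    rw [hcdef, star_add, star_mul, star_star, hqs]
  have hlt : ‖1 - c‖ < 1 := by
    rw [norm_sub_rev]
    linarith
  obtain ⟨w, hw⟩ : ∃ w : Aˣ, (w : A) = c :=
    ⟨Units.oneSub (1 - c) hlt, by rw [Units.val_oneSub, sub_sub_cancel]⟩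
  obtain ⟨e', hce, hec⟩ : ∃ e' : A, c * e' = 1 ∧ e' * c = 1 := by
    refine ⟨((w⁻¹ : Aˣ) : A), ?_, ?_⟩
    · rw [← hw]; exact w.mul_inv
    · rw [← hw]; exact w.inv_mul
  have hesa : star e' = e' := by
    have h1 : star e' * c = 1 := by
      calc star e' * c = star (c * e') := by rw [star_mul, hcsa]
        _ = 1 := by rw [hce, star_one]
    calc star e' = star e' * (c * e') := by rw [hce, mul_one]
      _ = (star e' * c) * e' := by rw [mul_assoc]
      _ = e' := by rw [h1, one_mul]
  have he1 : ‖e' - 1‖ ≤ 1 / 7 := by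
    have h3 : e' - 1 = e' * (1 - c) := by rw [mul_sub, mul_one, hec]
    have h4 : ‖e' - 1‖ ≤ ‖e'‖ * ‖1 - c‖ := h3 ▸ norm_mul_le _ _
    have h5 : ‖e'‖ ≤ ‖e' - 1‖ + 1 := by
      calc ‖e'‖ = ‖(e' - 1) + 1‖ := by rw [sub_add_cancel]
        _ ≤ ‖e' - 1‖ + ‖(1 : A)‖ := norm_add_le _ _
        _ = ‖e' - 1‖ + 1 := by rw [norm_one]
    have hc1' : ‖1 - c‖ < 1 / 8 := by rw [norm_sub_rev]; linarith
    nlinarith [mul_le_mul_of_nonneg_right h5 (norm_nonneg (1 - c)),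
      mul_le_mul_of_nonneg_left hc1'.le
        (by positivity : (0:ℝ) ≤ ‖e' - 1‖ + 1),
      norm_nonneg (e' - 1)]
  -- commutation relations
  have hpc : p * c = c * p := by
    have l1 : p * c = star b * b := by
      rw [hcdef, mul_add, hpq, add_zero, ← mul_assoc, hpbs]
    have l2 : c * p = star b * b := by
      rw [hcdef, add_mul, hqp, add_zero, mul_assoc, hbp]
    rw [l1, l2]
  have hpe : p * e' = e' * p := by
    calc p * e' = (e' * c) * (p * e') := by rw [hec, one_mul]
      _ = e' * (c * p) * e' := by simp only [mul_assoc]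
      _ = e' * (p * c) * e' := by rw [hpc]
      _ = (e' * p) * (c * e') := by simp only [mul_assoc]
      _ = e' * p := by rw [hce, mul_one]
  have hcq : c * q = q := by
    rw [hcdef, add_mul, mul_assoc, hbq, mul_zero, zero_add, hqq]
  have hqc : q * c = q := by
    rw [hcdef, mul_add, ← mul_assoc, hqbs, zero_mul, zero_add, hqq]
  have heq : e' * q = q := by
    calc e' * q = e' * (c * q) := by rw [hcq]
      _ = (e' * c) * q := by rw [mul_assoc]
      _ = q := by rw [hec, one_mul]
  have hqe : q * e' = q := by
    calc q * e' = (q * c) * e' := by rw [hqc]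
      _ = q * (c * e') := by rw [mul_assoc]
      _ = q := by rw [hce, mul_one]
  -- spectrum of e' is close to 1, in particular nonnegative
  have hesa' : IsSelfAdjoint e' := hesa
  have hspec : ∀ x ∈ spectrum ℝ e', 0 ≤ x ∧ |x - 1| ≤ 1 / 7 := by
    intro x hx
    have hx1 : x - 1 ∈ spectrum ℝ (e' - algebraMap ℝ A 1) := by
      rw [← spectrum.sub_singleton_eq]
      exact Set.sub_mem_sub hx rfl
    have hx2 : ‖x - 1‖ ≤ ‖e' - 1‖ := by
      have h := spectrum.norm_le_norm_of_mem hx1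
      rwa [map_one] at h
    rw [Real.norm_eq_abs] at hx2
    have habs : |x - 1| ≤ 1 / 7 := le_trans hx2 he1
    have := abs_le.mp habs
    exact ⟨by linarith, habs⟩
  obtain ⟨d, hddef⟩ : ∃ d : A, d = cfc Real.sqrt e' := ⟨_, rfl⟩
  have hdsa : star d = d := by
    rw [hddef]
    exact (cfc_predicate Real.sqrt e').star_eq
  have hdd : d * d = e' := by
    rw [hddef, ← cfc_mul Real.sqrt Real.sqrt e']
    have heqon : (spectrum ℝ e').EqOn (fun x => Real.sqrt x * Real.sqrt x) id := by
      intro x hx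
      exact Real.mul_self_sqrt (hspec x hx).1
    rw [cfc_congr heqon, cfc_id ℝ e']
  have hpd : p * d = d * p := by
    rw [hddef]; exact aux_commute_cfc hesa' hps hpe Real.sqrt
  have hcd : c * d = d * c := by
    rw [hddef]; exact aux_commute_cfc hesa' hcsa (by rw [hce, hec]) Real.sqrt
  have hqd : q * d = d * q := by
    rw [hqdef]
    simp only [sub_mul, mul_sub, one_mul, mul_one, hpd]
  have hdnorm : ‖d - 1‖ ≤ 1 / 7 := by
    have hd1 : d - 1 = cfc (fun x : ℝ => Real.sqrt x - 1) e' := by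
      rw [cfc_sub (fun x : ℝ => Real.sqrt x) (fun _ : ℝ => (1 : ℝ)) e', cfc_const_one ℝ e', hddef]
    rw [hd1]
    refine norm_cfc_le (by norm_num) fun x hx => ?_
    obtain ⟨hx0, hx2⟩ := hspec x hx
    have hs : Real.sqrt x * Real.sqrt x = x := Real.mul_self_sqrt hx0
    have hsn : 0 ≤ Real.sqrt x := Real.sqrt_nonneg x
    have habs : |Real.sqrt x - 1| ≤ |x - 1| := by
      calc |Real.sqrt x - 1| ≤ |Real.sqrt x - 1| * (Real.sqrt x + 1) :=
            le_mul_of_one_le_right (abs_nonneg _) (by linarith)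
        _ = |Real.sqrt x - 1| * |Real.sqrt x + 1| := by
            rw [abs_of_nonneg (by linarith : (0:ℝ) ≤ Real.sqrt x + 1)]
        _ = |(Real.sqrt x - 1) * (Real.sqrt x + 1)| := (abs_mul _ _).symm
        _ = |x - 1| := by
            congr 1
            linear_combination hs
    rw [Real.norm_eq_abs]
    exact le_trans habs hx2
  -- star v * v = p
  have hvsv : (d * star b) * (b * d) = p := by
    have hbbc : star b * b = c - q := by rw [hcdef]; abel
    calc d * star b * (b * d) = d * (star b * b) * d := by simp only [mul_assoc]
      _ = d * (c - q) * d := by rw [hbbc]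
      _ = d * c * d - d * q * d := by rw [mul_sub, sub_mul]
      _ = c * (d * d) - q * (d * d) := by rw [← hcd, ← hqd]; simp only [mul_assoc]
      _ = c * e' - q * e' := by rw [hdd]
      _ = 1 - q := by rw [hce, hqe]
      _ = p := by rw [hqdef]; abel
  -- the partial isometry
  refine ⟨b * d, ?_, ?_, ?_⟩
  · rw [star_mul, hdsa]
    exact hvsv
  · -- v * star v = p
    rw [star_mul, hdsa]
    have hr : b * d * (d * star b) = b * e' * star b := by
      rw [show b * d * (d * star b) = b * (d * d) * star b by simp only [mul_assoc], hdd]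
    rw [hr]
    obtain ⟨r, hrdef⟩ : ∃ r : A, r = b * e' * star b := ⟨_, rfl⟩
    rw [← hrdef]
    have hrsa : star r = r := by
      rw [hrdef, star_mul, star_mul, star_star, hesa, mul_assoc]
    have hpr : p * r = r := by
      rw [hrdef, ← mul_assoc, ← mul_assoc, hpb]
    have hrp : r * p = r := by
      rw [hrdef, mul_assoc, mul_assoc, hbsp, ← mul_assoc]
    have hvp : (b * d) * p = b * d := by
      rw [mul_assoc, ← hpd, ← mul_assoc, hbp]
    have hrr : r * r = r := by
      have hrv : r = (b * d) * (d * star b) := by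
        rw [hrdef, show b * d * (d * star b) = b * (d * d) * star b by
          simp only [mul_assoc], hdd]
      rw [hrv]
      calc (b * d) * (d * star b) * ((b * d) * (d * star b))
          = (b * d) * ((d * star b) * (b * d)) * (d * star b) := by simp only [mul_assoc]
        _ = (b * d) * p * (d * star b) := by rw [hvsv]
        _ = (b * d) * (d * star b) := by rw [hvp]
    have hrnorm : ‖r - p‖ < 1 := by
      have hid : r - p = b * (e' - 1) * star b + (b * star b - p) := by
        rw [hrdef, mul_sub, sub_mul, mul_one]
        abel
      have hn1 : ‖b * (e' - 1) * star b‖ ≤ 1 / 7 := by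
        calc ‖b * (e' - 1) * star b‖ ≤ ‖b * (e' - 1)‖ * ‖star b‖ := norm_mul_le _ _
          _ ≤ ‖b‖ * ‖e' - 1‖ * ‖star b‖ := by gcongr; exact norm_mul_le _ _
          _ ≤ 1 * (1 / 7) * 1 := by rw [norm_star]; gcongr
          _ = 1 / 7 := by ring
      calc ‖r - p‖ ≤ ‖b * (e' - 1) * star b‖ + ‖b * star b - p‖ := hid ▸ norm_add_le _ _
        _ < 1 := by linarith
    have hx_sa : star (p - r) = p - r := by rw [star_sub, hps, hrsa]
    have hx_idem : (p - r) * (p - r) = p - r := by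
      rw [sub_mul, mul_sub, mul_sub, hpp, hpr, hrp, hrr]
      abel
    have hx_norm : ‖p - r‖ * ‖p - r‖ = ‖p - r‖ := by
      have h := CStarRing.norm_star_mul_self (x := p - r)
      rw [hx_sa, hx_idem] at h
      exact h.symm
    have hx_lt : ‖p - r‖ < 1 := by rw [norm_sub_rev]; exact hrnorm
    have hx0 : ‖p - r‖ = 0 := by
      by_contra hne
      have hone : ‖p - r‖ = 1 :=
        mul_right_cancel₀ hne (hx_norm.trans (one_mul _).symm)
      rw [hone] at hx_lt
      exact absurd hx_lt (lt_irrefl 1)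
    have hpr0 : p - r = 0 := norm_eq_zero.mp hx0
    rw [← sub_eq_zero, show r - p = -(p - r) by abel, hpr0, neg_zero]
  · -- norm estimate
    have hid : b * d - p * a * p = b * (d - 1) := by
      rw [mul_sub, mul_one, hbdef]
    rw [hid]
    calc ‖b * (d - 1)‖ ≤ ‖b‖ * ‖d - 1‖ := norm_mul_le _ _
      _ ≤ 1 * (1 / 7) := by gcongr
      _ < 2 / 7 := by norm_num
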